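/- Let f : ℝ₊ → ℝ satisfy f(x) > 0 for all x > 0 and the Beurling functional equation f(v + u·f(v)) = f(u)·f(v) for all u, v > 0, and suppose f(a) = 1 for some a > 0. Then for every w in the range set R_f := {f(x) : x > 0}, one has f(w·a) = 1. -/

import Mathlib

theorem bfe_value_one_on_range_multiples
    (f : ℝ → ℝ) (a : ℝ) (ha : 0 < a)
    (hpos : ∀ x : ℝ, 0 < x → 0 < f x)
    (hBFE : ∀ u v : ℝ, 0 < u → 0 < v → f (v + u * f v) = f u * f v)
    (hfa : f a = 1) :
    ∀ w ∈ {w : ℝ | ∃ x : ℝ, 0 < x ∧ w = f x}, f (w * a) = 1 := by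
  rintro w ⟨x, hx, rfl⟩
  have hw : 0 < f x := hpos x hx
  -- periodicity with period a
  have hper : ∀ u : ℝ, 0 < u → f (u + a) = f u := by
    intro u hu
    have h := hBFE u a hu ha
    rw [hfa, mul_one, mul_one, add_comm] at h
    exact h
  have hN : ∀ n : ℕ, ∀ t : ℝ, 0 < t → f (t + n * a) = f t := by
    intro n
    induction n with
    | zero => intro t _; simp
    | succ k ih =>
      intro t ht
      have e : t + ((k : ℝ) + 1) * a = (t + k * a) + a := by ring
      have hpos' : 0 < t + (k : ℝ) * a := by positivity
      push_cast
      rw [e, hper _ hpos', ih t ht]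
  -- a * f x is a period of f on (x, ∞)
  have hstep : ∀ t : ℝ, x < t → f (t + a * f x) = f t := by
    intro t ht
    have htx : 0 < t - x := by linarith
    have hu : 0 < (t - x) / f x := by positivity
    have h1 := hBFE ((t - x) / f x) x hu hx
    have h2 := hBFE ((t - x) / f x + a) x (by positivity) hx
    have e1 : x + (t - x) / f x * f x = t := by field_simp; ring
    have e2 : x + ((t - x) / f x + a) * f x = t + a * f x := by
      field_simp; ring
    rw [e1] at h1
    rw [e2, hper _ hu] at h2
    rw [h2, ← h1]
  obtain ⟨n, hn⟩ := exists_nat_gt (x / a)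
  have hna : x < n * a := by rwa [div_lt_iff₀ ha] at hn
  have hT : x < a + n * a := by nlinarith
  have h1 := hstep (a + n * a) hT
  have h2 : f (a + n * a) = 1 := by rw [hN n a ha, hfa]
  have h3 : a + n * a + a * f x = a * f x + (n + 1 : ℕ) * a := by push_cast; ring
  have h4 : f (a * f x + (n + 1 : ℕ) * a) = f (a * f x) := hN (n + 1) _ (by positivity)
  rw [h3, h4, h2] at h1
  rw [mul_comm]
  exact h1
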